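/- Iterating an affine task can only decrease its class: for every 2-process affine task A on n = 3^ℓ (ℓ ≥ 1) and every k ≥ 1, class(A^{⋆k}) ⊑ class(A), where ⊑ is the class order. -/

import Mathlib

/-!
2-process affine tasks, modeled combinatorially.
The ℓ-th iterated standard chromatic subdivision of the 1-simplex is the path
graph on vertices `{0, …, n}`, `n = 3^ℓ`, whose edges are the pairs `{i, i+1}`
for `0 ≤ i < n`; vertex `i` has color `i % 2`, vertex `0` is the solo vertex of
process `p₀` and vertex `n` the solo vertex of `p₁`.  An edge `{i, i+1}` is
encoded by its left endpoint `i`, and a 2-process affine task on `n` is a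
nonempty finite set `A : Finset ℕ` of such edges (left endpoints `< n`).
-/

/-- `StepRel A x y`: the vertices `x` and `y` are joined by an edge of `A`
(the edge `{i, i+1}` being encoded by its left endpoint `i`). -/
def StepRel (A : Finset ℕ) (x y : ℕ) : Prop :=
  (y = x + 1 ∧ x ∈ A) ∨ (x = y + 1 ∧ y ∈ A)

/-- `P₁(A)`: the vertices `0` and `n` are joined by a path all of whose edges
lie in `A`. -/
def P1 (n : ℕ) (A : Finset ℕ) : Prop := Relation.ReflTransGen (StepRel A) 0 n

/-- `P₂(A)`: the edge `{0, 1}` belongs to `A`. -/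
def P2 (A : Finset ℕ) : Prop := 0 ∈ A

/-- `P₃(A)`: the edge `{n-1, n}` belongs to `A`. -/
def P3 (n : ℕ) (A : Finset ℕ) : Prop := n - 1 ∈ A

open Classical in
/-- The class of a 2-process affine task `A` on `{0,…,n}`:
`1` if `P₁(A)`; `2` if `¬P₁ ∧ P₂ ∧ P₃`; `3` if `¬P₁ ∧ P₂ ∧ ¬P₃`;
`4` if `¬P₁ ∧ ¬P₂ ∧ P₃`; `5` if `¬P₁ ∧ ¬P₂ ∧ ¬P₃`. -/
noncomputable def classOf (n : ℕ) (A : Finset ℕ) : ℕ :=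
  if P1 n A then 1
  else if P2 A then (if P3 n A then 2 else 3)
  else (if P3 n A then 4 else 5)

/-- The class order `⊑` on `{1, …, 5}`: `c ⊑ c'` iff `c = c'`, or `c = 1`,
or `c' = 5`, or (`c = 2` and `c' ∈ {3, 4}`). -/
def ClassLE (c c' : ℕ) : Prop :=
  c = c' ∨ c = 1 ∨ c' = 5 ∨ (c = 2 ∧ (c' = 3 ∨ c' = 4))

/-- The composition `A ⋆ B` of a task `A` on `{0,…,n}` with a task `B` on
`{0,…,m}`: each edge of `A` is replaced by an appropriately oriented copy of
`B`; its edges are `{i·m + r, i·m + r + 1}` for `{i, i+1} ∈ A` and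
`{j, j+1} ∈ B`, where `r = j` if `i` is even and `r = m - 1 - j` if `i` is odd
(edges encoded by left endpoints). -/
def comp (m : ℕ) (A B : Finset ℕ) : Finset ℕ :=
  (A ×ˢ B).image fun p => p.1 * m + (if Even p.1 then p.2 else m - 1 - p.2)

/-- `iterTask n A k` is the iterate `A^{⋆k}` (for `k ≥ 1`) of a task `A` on
`{0,…,n}`, a task on `{0,…,n^k}`: `A^{⋆1} = A`, `A^{⋆(k+1)} = A^{⋆k} ⋆ A`.
(The value at `k = 0` is irrelevant and set to `A`.) -/
def iterTask (n : ℕ) (A : Finset ℕ) : ℕ → Finset ℕ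
  | 0 => A
  | 1 => A
  | k + 2 => comp n (iterTask n A (k + 1)) A

/-- A chromatic carrier-preserving simplicial map `δ` from a task `A` on
`{0,…,n}` to the subdivided 1-simplex on `{0,…,m}`: `δ` maps `{0,…,n}` to
`{0,…,m}`; `δ i ≡ i (mod 2)` for every vertex incident to an edge of `A`;
`|δ (i+1) - δ i| = 1` for every edge `{i, i+1} ∈ A`; `δ 0 = 0` whenever
`{0,1} ∈ A`; and `δ n = m` whenever `{n-1, n} ∈ A`. -/
def IsCCMap (n m : ℕ) (A : Finset ℕ) (δ : ℕ → ℕ) : Prop :=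
  (∀ i ≤ n, δ i ≤ m) ∧
  (∀ i ∈ A, δ i % 2 = i % 2 ∧ δ (i + 1) % 2 = (i + 1) % 2) ∧
  (∀ i ∈ A, δ (i + 1) = δ i + 1 ∨ δ i = δ (i + 1) + 1) ∧
  (0 ∈ A → δ 0 = 0) ∧
  (n - 1 ∈ A → δ n = m)

/-- The image task `δ(A) = { {δ i, δ (i+1)} : {i, i+1} ∈ A }`
(edges encoded by left endpoints, i.e. by `min (δ i) (δ (i+1))`). -/
def imageTask (A : Finset ℕ) (δ : ℕ → ℕ) : Finset ℕ :=
  A.image fun i => min (δ i) (δ (i + 1))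

/-- `Solves m n B A`: the affine model `B*` of a task `B` on `{0,…,m}` solves
the task `A` on `{0,…,n}`, i.e. there exist `k ≥ 1` and a chromatic
carrier-preserving simplicial map `δ` from `B^{⋆k}` (a task on `{0,…,m^k}`)
to the subdivided 1-simplex on `{0,…,n}` with `δ(B^{⋆k}) ⊆ A`. -/
def Solves (m n : ℕ) (B A : Finset ℕ) : Prop :=
  ∃ k, 1 ≤ k ∧ ∃ δ : ℕ → ℕ,
    IsCCMap (m ^ k) n (iterTask m B k) δ ∧ imageTask (iterTask m B k) δ ⊆ A

/-! ### Auxiliary lemmas -/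

lemma mem_comp {m x : ℕ} {X Y : Finset ℕ} :
    x ∈ comp m X Y ↔ ∃ i ∈ X, ∃ j ∈ Y,
      i * m + (if Even i then j else m - 1 - j) = x := by
  simp [comp, Finset.mem_image, Finset.mem_product]; tauto

lemma stepRel_symm (A : Finset ℕ) : Symmetric (StepRel A) := by
  intro x y h
  rcases h with ⟨h1, h2⟩ | ⟨h1, h2⟩
  · exact Or.inr ⟨h1, h2⟩
  · exact Or.inl ⟨h1, h2⟩

lemma rtg_lift {α β : Type*} {r : α → α → Prop} {s : β → β → Prop} (f : α → β)
    (h : ∀ x y, r x y → Relation.ReflTransGen s (f x) (f y)) {a b : α}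
    (hab : Relation.ReflTransGen r a b) :
    Relation.ReflTransGen s (f a) (f b) := by
  induction hab with
  | refl => exact .refl
  | tail _ hstep ih => exact ih.trans (h _ _ hstep)

lemma natDivHelper {n i r : ℕ} (hn : 0 < n) (hr : r < n) : (i * n + r) / n = i := by
  rw [mul_comm, Nat.mul_add_div hn, Nat.div_eq_of_lt hr]
  omega

/-- A block path: for `i ∈ X`, the copy of `A` inside block `i` connects
`i*n` to `(i+1)*n` in `comp n X A`, provided `0 ↝ n` in `A`. -/
lemma block_path (n : ℕ) (X A : Finset ℕ) (hltA : ∀ j ∈ A, j < n)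
    (hA : Relation.ReflTransGen (StepRel A) 0 n) {i : ℕ} (hi : i ∈ X) :
    Relation.ReflTransGen (StepRel (comp n X A)) (i * n) ((i + 1) * n) := by
  by_cases hev : Even i
  · have := rtg_lift (fun j => i * n + j)
      (s := StepRel (comp n X A)) ?_ hA
    · simpa [Nat.succ_mul] using this
    · intro x y hxy
      show Relation.ReflTransGen _ (i * n + x) (i * n + y)
      rcases hxy with ⟨h1, h2⟩ | ⟨h1, h2⟩
      · refine Relation.ReflTransGen.single (Or.inl ⟨by omega, ?_⟩)
        exact mem_comp.mpr ⟨i, hi, x, h2, by simp [hev]⟩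
      · refine Relation.ReflTransGen.single (Or.inr ⟨by omega, ?_⟩)
        exact mem_comp.mpr ⟨i, hi, y, h2, by simp [hev]⟩
  · -- odd block: reversed copy
    have key : Relation.ReflTransGen (StepRel (comp n X A))
        ((i + 1) * n - 0) ((i + 1) * n - n) := by
      refine rtg_lift (fun j => (i + 1) * n - j) ?_ hA
      intro x y hxy
      show Relation.ReflTransGen _ ((i + 1) * n - x) ((i + 1) * n - y)
      have hT : n ≤ (i + 1) * n := Nat.le_mul_of_pos_left n (by omega)
      rcases hxy with ⟨h1, h2⟩ | ⟨h1, h2⟩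
      · have hx : x < n := hltA x h2
        refine Relation.ReflTransGen.single (Or.inr ⟨by omega, ?_⟩)
        refine mem_comp.mpr ⟨i, hi, x, h2, ?_⟩
        simp only [if_neg hev]
        have : i * n + (n - 1 - x) = (i + 1) * n - (x + 1) := by
          have : (i + 1) * n = i * n + n := by ring
          omega
        omega
      · have hy : y < n := hltA y h2
        refine Relation.ReflTransGen.single (Or.inl ⟨by omega, ?_⟩)
        refine mem_comp.mpr ⟨i, hi, y, h2, ?_⟩
        simp only [if_neg hev]
        have : (i + 1) * n = i * n + n := by ring
        omega
    have hT : n ≤ (i + 1) * n := Nat.le_mul_of_pos_left n (by omega)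
    have e1 : (i + 1) * n - n = i * n := by
      have : (i + 1) * n = i * n + n := by ring
      omega
    have e0 : (i + 1) * n - 0 = (i + 1) * n := by omega
    rw [e0, e1] at key
    exact (@Relation.ReflTransGen.symmetric _ _ ⟨fun a b h => stepRel_symm _ h⟩).symm _ _ key

/-- Composition preserves connectivity `P₁`. -/
lemma P1_comp (n M : ℕ) (X A : Finset ℕ) (hltA : ∀ j ∈ A, j < n)
    (hX : Relation.ReflTransGen (StepRel X) 0 M)
    (hA : Relation.ReflTransGen (StepRel A) 0 n) :
    Relation.ReflTransGen (StepRel (comp n X A)) 0 (M * n) := by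
  have := rtg_lift (fun x => x * n)
    (s := StepRel (comp n X A)) ?_ hX
  · simpa using this
  · intro x y hxy
    rcases hxy with ⟨h1, h2⟩ | ⟨h1, h2⟩
    · subst h1; exact block_path n X A hltA hA h2
    · subst h1
      exact (@Relation.ReflTransGen.symmetric _ _ ⟨fun a b h => stepRel_symm _ h⟩).symm _ _
        (block_path n X A hltA hA h2)

/-- Composition reflects connectivity `P₁` (projection `x ↦ x / n`). -/
lemma P1_proj (n M : ℕ) (hn : 0 < n) (X A : Finset ℕ) (hltA : ∀ j ∈ A, j < n)
    (h : Relation.ReflTransGen (StepRel (comp n X A)) 0 (M * n)) :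
    Relation.ReflTransGen (StepRel X) 0 M := by
  have step : ∀ x y, StepRel (comp n X A) x y →
      Relation.ReflTransGen (StepRel X) (x / n) (y / n) := by
    have core : ∀ x, x ∈ comp n X A →
        Relation.ReflTransGen (StepRel X) (x / n) ((x + 1) / n) := by
      intro x hx
      obtain ⟨i, hi, j, hj, hval⟩ := mem_comp.mp hx
      have hjn : j < n := hltA j hj
      set r := if Even i then j else n - 1 - j with hr
      have hrn : r < n := by rw [hr]; split <;> omega
      have hxd : x / n = i := by rw [← hval]; exact natDivHelper hn hrn
      by_cases hc : r + 1 < n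
      · have : (x + 1) / n = i := by
          have : x + 1 = i * n + (r + 1) := by omega
          rw [this]; exact natDivHelper hn hc
        rw [hxd, this]
      · have hrn1 : r = n - 1 := by omega
        have : (x + 1) / n = i + 1 := by
          have hx1 : x + 1 = (i + 1) * n + 0 := by
            have : (i + 1) * n = i * n + n := by ring
            omega
          rw [hx1]; exact natDivHelper hn hn
        rw [hxd, this]
        exact Relation.ReflTransGen.single (Or.inl ⟨rfl, hi⟩)
    intro x y hxy
    rcases hxy with ⟨h1, h2⟩ | ⟨h1, h2⟩
    · subst h1; exact core x h2
    · subst h1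
      exact (@Relation.ReflTransGen.symmetric _ _ ⟨fun a b h => stepRel_symm X h⟩).symm _ _ (core y h2)
  have := rtg_lift (fun x => x / n) step h
  simpa [Nat.mul_div_cancel _ hn] using this

theorem iter_class_le
    (ℓ n : ℕ) (hℓ : 1 ≤ ℓ) (hn : n = 3 ^ ℓ)
    (A : Finset ℕ) (hne : A.Nonempty) (hlt : ∀ i ∈ A, i < n)
    (k : ℕ) (hk : 1 ≤ k) :
    ClassLE (classOf (n ^ k) (iterTask n A k)) (classOf n A) := by
  obtain ⟨k', rfl⟩ : ∃ k', k = k' + 1 := ⟨k - 1, by omega⟩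
  have hn3 : 3 ≤ n := by
    rw [hn]
    calc (3 : ℕ) = 3 ^ 1 := by norm_num
    _ ≤ 3 ^ ℓ := Nat.pow_le_pow_right (by norm_num) hℓ
  have hn0 : 0 < n := by omega
  have hodd : n % 2 = 1 := by rw [hn, Nat.pow_mod]; norm_num
  -- bound on iterates
  have hbound : ∀ m, ∀ i ∈ iterTask n A (m + 1), i < n ^ (m + 1) := by
    intro m
    induction m with
    | zero => simpa [iterTask] using hlt
    | succ m ih =>
      intro x hx
      obtain ⟨i, hi, j, hj, hval⟩ := mem_comp.mp hx
      have hi' : i < n ^ (m + 1) := ih i hi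
      have hj' : j < n := hlt j hj
      have hr : (if Even i then j else n - 1 - j) < n := by split <;> omega
      calc x = i * n + _ := hval.symm
      _ < i * n + n := by omega
      _ = (i + 1) * n := by ring
      _ ≤ n ^ (m + 1) * n := Nat.mul_le_mul_right n (by omega)
      _ = n ^ (m + 2) := by ring
  -- P2 is preserved and reflected
  have h2 : ∀ m, (0 ∈ iterTask n A (m + 1) ↔ 0 ∈ A) := by
    intro m
    induction m with
    | zero => simp [iterTask]
    | succ m ih =>
      show 0 ∈ comp n (iterTask n A (m + 1)) A ↔ 0 ∈ A
      constructor
      · intro hx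
        obtain ⟨i, hi, j, hj, hval⟩ := mem_comp.mp hx
        have hi0 : i = 0 := by
          by_contra hne'
          have : 1 ≤ i := by omega
          have : n ≤ i * n := Nat.le_mul_of_pos_left n (by omega)
          omega
        subst hi0
        simp only [Nat.zero_mul, Nat.zero_add, if_pos (Even.zero)] at hval
        subst hval; exact hj
      · intro h0
        exact mem_comp.mpr ⟨0, ih.mpr h0, 0, h0, by simp⟩
  -- P3 is preserved and reflected
  have h3 : ∀ m, (n ^ (m + 1) - 1 ∈ iterTask n A (m + 1) ↔ n - 1 ∈ A) := by
    intro m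
    induction m with
    | zero => simp [iterTask]
    | succ m ih =>
      show n ^ (m + 2) - 1 ∈ comp n (iterTask n A (m + 1)) A ↔ n - 1 ∈ A
      set M := n ^ (m + 1) with hM
      have hM0 : 0 < M := Nat.pow_pos hn0
      have hModd : M % 2 = 1 := by rw [hM, Nat.pow_mod, hodd]; simp
      have hMn : n ^ (m + 2) = M * n := by rw [hM]; ring
      have hMn1 : 1 ≤ M * n := Nat.mul_pos hM0 hn0
      have e : M * n - 1 = (M - 1) * n + (n - 1) := by
        have h1 : (1 : ℕ) ≤ M := hM0
        have h2' : (1 : ℕ) ≤ n := hn0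
        zify [hMn1, h1, h2']
        ring
      have hevM : Even (M - 1) := by
        rw [Nat.even_iff]; omega
      constructor
      · intro hx
        obtain ⟨i, hi, j, hj, hval⟩ := mem_comp.mp hx
        rw [hMn] at hval
        have hj' : j < n := hlt j hj
        set r := if Even i then j else n - 1 - j with hr
        have hrn : r < n := by rw [hr]; split <;> omega
        have hi1 : i = M - 1 := by
          have d1 : (i * n + r) / n = i := natDivHelper hn0 hrn
          have d2 : ((M - 1) * n + (n - 1)) / n = M - 1 :=
            natDivHelper hn0 (by omega)
          rw [hval, e] at d1
          omega
        subst hi1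
        have hreq : r = n - 1 := by
          rw [e] at hval
          omega
        rw [hr, if_pos hevM] at hreq
        rwa [← hreq]
      · intro hA3
        refine mem_comp.mpr ⟨M - 1, ih.mpr hA3, n - 1, hA3, ?_⟩
        rw [if_pos hevM, hMn, e]
  -- P1 is preserved and reflected
  have h1 : ∀ m, (P1 (n ^ (m + 1)) (iterTask n A (m + 1)) ↔ P1 n A) := by
    intro m
    induction m with
    | zero => simp [iterTask, pow_one]
    | succ m ih =>
      constructor
      · intro hp
        apply ih.mp
        unfold P1 at hp ⊢
        have hMn : n ^ (m + 2) = n ^ (m + 1) * n := by ring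
        rw [hMn] at hp
        exact P1_proj n (n ^ (m + 1)) hn0 _ A hlt hp
      · intro hp
        have hX : P1 (n ^ (m + 1)) (iterTask n A (m + 1)) := ih.mpr hp
        unfold P1 at hX hp ⊢
        have hMn : n ^ (m + 2) = n ^ (m + 1) * n := by ring
        rw [hMn]
        exact P1_comp n (n ^ (m + 1)) _ A hlt hX hp
  left
  simp only [classOf, P2, P3, h2 k', h3 k']
  by_cases hp : P1 n A
  · rw [if_pos hp, if_pos ((h1 k').mpr hp)]
  · rw [if_neg hp, if_neg (fun c => hp ((h1 k').mp c))]
    congr
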